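/- arXiv:2003.06374 — 2 statements merged into one kernel-verified Lean document; each statement's English description precedes it below -/
import Mathlib

section
/- Let G be a linearly ordered abelian group and H a subgroup. Define the initial index ε(G/H) as the cardinality of the set of elements g of G with g ≥ 0 such that g < h for every h in H with h > 0. Then ε(G/H) is at most the index [G : H] (as an inequality of cardinals, when the index is finite). -/
/-- The initial index `ε(G/H)` of a subgroup `H` of a linearly ordered abelian group `G`,
i.e. the cardinality of `{g ∈ G : g ≥ 0 and g < h for all h ∈ H with h > 0}`,
is at most the index `[G : H]`, provided the index is finite. -/
theorem initial_index_le_index {G : Type*} [AddCommGroup G] [LinearOrder G] [IsOrderedAddMonoid G]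
    (H : AddSubgroup G) (hfin : H.index ≠ 0) :
    Cardinal.mk {g : G // 0 ≤ g ∧ ∀ h ∈ H, 0 < h → g < h} ≤ (H.index : Cardinal) := by
  have hfinite : Finite (G ⧸ H) := (Nat.card_ne_zero.mp hfin).2
  have hinj : Function.Injective
      (fun g : {g : G // 0 ≤ g ∧ ∀ h ∈ H, 0 < h → g < h} =>
        (QuotientAddGroup.mk g.val : G ⧸ H)) := by
    rintro ⟨a, ha0, ha⟩ ⟨b, hb0, hb⟩ hab
    simp only [Subtype.mk.injEq]
    have hmem : -a + b ∈ H := (QuotientAddGroup.eq).mp hab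
    rw [neg_add_eq_sub] at hmem
    by_contra hne
    rcases lt_or_gt_of_ne hne with h | h
    · have hpos : (0 : G) < b - a := sub_pos.mpr h
      have hba := hb _ hmem hpos
      rw [lt_sub_iff_add_lt] at hba
      exact absurd (lt_of_add_lt_add_left (a := b) (by simpa using hba)) (not_lt.mpr ha0)
    · have hmem' : a - b ∈ H := by simpa using neg_mem hmem
      have hpos : (0 : G) < a - b := sub_pos.mpr h
      have hab' := ha _ hmem' hpos
      rw [lt_sub_iff_add_lt] at hab'
      exact absurd (lt_of_add_lt_add_left (a := a) (by simpa using hab')) (not_lt.mpr hb0)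
  calc Cardinal.mk {g : G // 0 ≤ g ∧ ∀ h ∈ H, 0 < h → g < h}
      ≤ Cardinal.mk (G ⧸ H) := Cardinal.mk_le_of_injective hinj
    _ = (H.index : Cardinal) := by
        rw [AddSubgroup.index, Nat.card, Cardinal.cast_toNat_of_lt_aleph0
          (Cardinal.lt_aleph0_of_finite _)]
end

section
/- Let T be a local domain, P a prime ideal of T, and ω a valuation on the quotient field of T/P dominating T/P, inducing a pseudo-valuation on T by ω(f) = ω(f mod P) for f ∉ P and ω(f) = ∞ for f ∈ P. Suppose V_ω/m_ω is an algebraic extension of T/m_T. Let I ⊆ T be an ideal with I ⊄ P, let f ∈ I attain the minimal ω-value of I, and let J be the strict transform of P in T[I/f], i.e., J = ⋃_{j≥1} (P·T[I/f] : I^j·T[I/f]). Then J is a prime ideal of T[I/f], the induced map T/P → T[I/f]/J is birational (both domains have the same quotient field), and the prime ideal n of T[I/f] consisting of elements of positive ω-value is a maximal ideal containing J. -/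
set_option synthInstance.maxHeartbeats 1000000
set_option maxHeartbeats 1000000

private lemma st_aux_gen
    {T : Type*} [CommRing T] [IsDomain T]
    (I : Ideal T) (f : T) (hf0 : f ≠ 0)
    (S : Subalgebra T (FractionRing T))
    (hS : S = Algebra.adjoin T {x : FractionRing T |
      ∃ g ∈ I, x * algebraMap T (FractionRing T) f = algebraMap T (FractionRing T) g}) :
    ∀ g ∈ I, ∃ s : S, (s : FractionRing T) * algebraMap T (FractionRing T) f
      = algebraMap T (FractionRing T) g := by
  intro g hg
  have hfK : algebraMap T (FractionRing T) f ≠ 0 := by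
    simpa using (map_ne_zero_iff _ (IsFractionRing.injective T (FractionRing T))).mpr hf0
  refine ⟨⟨algebraMap T (FractionRing T) g / algebraMap T (FractionRing T) f, ?_⟩, ?_⟩
  · rw [hS]
    apply Algebra.subset_adjoin
    exact ⟨g, hg, by field_simp⟩
  · show algebraMap T (FractionRing T) g / algebraMap T (FractionRing T) f
        * algebraMap T (FractionRing T) f = _
    field_simp

private lemma st_aux_pow
    {T : Type*} [CommRing T] [IsDomain T]
    (I : Ideal T) (f : T) (hf0 : f ≠ 0)
    (S : Subalgebra T (FractionRing T))
    (hS : S = Algebra.adjoin T {x : FractionRing T |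
      ∃ g ∈ I, x * algebraMap T (FractionRing T) f = algebraMap T (FractionRing T) g}) :
    ∀ j : ℕ, ∀ b ∈ I ^ j, ∃ s : S, (s : FractionRing T)
      * algebraMap T (FractionRing T) f ^ j = algebraMap T (FractionRing T) b := by
  have hgen := st_aux_gen I f hf0 S hS
  set K := FractionRing T
  intro j
  induction j with
  | zero =>
    intro b _
    exact ⟨algebraMap T S b, by rw [pow_zero, mul_one]; rfl⟩
  | succ j ih =>
    intro b hb
    rw [pow_succ] at hb
    refine Submodule.mul_induction_on hb ?_ ?_
    · intro b' hb' g hg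
      obtain ⟨s1, hs1⟩ := ih b' hb'
      obtain ⟨s2, hs2⟩ := hgen g hg
      refine ⟨s1 * s2, ?_⟩
      have hc : ((s1 * s2 : S) : K) = (s1 : K) * (s2 : K) := rfl
      rw [hc, map_mul, pow_succ]
      linear_combination ((s2 : K) * algebraMap T K f) * hs1 + algebraMap T K b' * hs2
    · rintro b1 b2 ⟨s1, hs1⟩ ⟨s2, hs2⟩
      refine ⟨s1 + s2, ?_⟩
      have hc : ((s1 + s2 : S) : K) = (s1 : K) + (s2 : K) := rfl
      rw [hc, map_add]
      linear_combination hs1 + hs2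

private lemma st_aux_struct
    {T : Type*} [CommRing T] [IsDomain T]
    (I : Ideal T) (f : T) (hfI : f ∈ I)
    (S : Subalgebra T (FractionRing T))
    (hS : S = Algebra.adjoin T {x : FractionRing T |
      ∃ g ∈ I, x * algebraMap T (FractionRing T) f = algebraMap T (FractionRing T) g}) :
    ∀ x : S, ∃ j : ℕ, ∃ a ∈ I ^ j, (x : FractionRing T)
      * algebraMap T (FractionRing T) f ^ j = algebraMap T (FractionRing T) a := by
  set K := FractionRing T
  have hstruct' : ∀ x : K, x ∈ Algebra.adjoin T {x : K |
      ∃ g ∈ I, x * algebraMap T K f = algebraMap T K g} →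
      ∃ j : ℕ, ∃ a ∈ I ^ j, x * algebraMap T K f ^ j = algebraMap T K a := by
    intro x hx
    induction hx using Algebra.adjoin_induction with
    | mem x hx =>
      obtain ⟨g, hg, hxg⟩ := hx
      exact ⟨1, g, by rwa [pow_one], by rwa [pow_one]⟩
    | algebraMap t =>
      refine ⟨0, t, ?_, by rw [pow_zero, mul_one]⟩
      rw [pow_zero, Ideal.one_eq_top]; trivial
    | add x y hx hy ihx ihy =>
      obtain ⟨j1, a1, ha1, he1⟩ := ihx
      obtain ⟨j2, a2, ha2, he2⟩ := ihy
      refine ⟨j1 + j2, a1 * f ^ j2 + a2 * f ^ j1, ?_, ?_⟩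
      · apply Ideal.add_mem
        · rw [pow_add]
          exact Ideal.mul_mem_mul ha1 (Ideal.pow_mem_pow hfI j2)
        · rw [add_comm j1 j2, pow_add]
          exact Ideal.mul_mem_mul ha2 (Ideal.pow_mem_pow hfI j1)
      · simp only [map_add, map_mul, map_pow]
        rw [pow_add]
        linear_combination (algebraMap T K f ^ j2) * he1 + (algebraMap T K f ^ j1) * he2
    | mul x y hx hy ihx ihy =>
      obtain ⟨j1, a1, ha1, he1⟩ := ihx
      obtain ⟨j2, a2, ha2, he2⟩ := ihy
      refine ⟨j1 + j2, a1 * a2, by rw [pow_add]; exact Ideal.mul_mem_mul ha1 ha2, ?_⟩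
      rw [map_mul, pow_add]
      linear_combination (y * algebraMap T K f ^ j2) * he1 + algebraMap T K a1 * he2
  intro x
  exact hstruct' (x : K) (by rw [← hS]; exact x.2)

private lemma st_aux_psi
    {T : Type*} [CommRing T] [IsDomain T]
    {L : Type*} [Field L] (π : T →+* L)
    (I : Ideal T) (f : T)
    (S : Subalgebra T (FractionRing T))
    (ψ : S →+* L)
    (hψT : ∀ s : T, ψ (algebraMap T S s) = π s)
    (hψf : ∀ (x : S) (g : T), g ∈ I →
      (x : FractionRing T) * algebraMap T (FractionRing T) f =
        algebraMap T (FractionRing T) g → ψ x * π f = π g) :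
    ∀ (x : S) (j : ℕ) (a : T), a ∈ I ^ j →
      (x : FractionRing T) * algebraMap T (FractionRing T) f ^ j
        = algebraMap T (FractionRing T) a → ψ x * π f ^ j = π a := by
  set K := FractionRing T
  intro x j a ha hx
  cases j with
  | zero =>
    rw [pow_zero, mul_one] at hx
    have hxa : x = algebraMap T S a := Subtype.ext (by rw [hx]; rfl)
    rw [pow_zero, mul_one, hxa, hψT]
  | succ k =>
    have haI : a ∈ I := Ideal.pow_le_self (Nat.succ_ne_zero k) ha
    have hy : ((algebraMap T S (f ^ k) * x : S) : K) * algebraMap T K f = algebraMap T K a := by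
      have hc : ((algebraMap T S (f ^ k) * x : S) : K)
          = algebraMap T K (f ^ k) * (x : K) := rfl
      rw [hc, map_pow]
      linear_combination hx
    have := hψf (algebraMap T S (f ^ k) * x) a haI hy
    rw [map_mul, hψT, map_pow] at this
    calc ψ x * π f ^ (k + 1) = π f ^ k * ψ x * π f := by ring
      _ = π a := this

private lemma st_aux_key
    {T : Type*} [CommRing T] [IsLocalRing T]
    {L : Type*} [Field L] {Γ₀ : Type*} [LinearOrderedCommGroupWithZero Γ₀]
    (v : Valuation L Γ₀) (π : T →+* L)
    (hdom' : ∀ s : T, v (π s) < 1 ↔ s ∈ IsLocalRing.maximalIdeal T) :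
    ∀ m : ℕ, 0 < m → ∀ c : ℕ → T, ∀ l : L, v l = 1 →
      v (l ^ m + ∑ i ∈ Finset.range m, π (c i) * l ^ i) < 1 →
      ∃ (k : ℕ) (e : ℕ → T) (u : T), IsUnit u ∧
        v (π u + l * (l ^ k + ∑ i ∈ Finset.range k, π (e i) * l ^ i)) < 1 := by
  intro m
  induction m with
  | zero => intro h; exact absurd h (lt_irrefl 0)
  | succ m ih =>
    intro _ c l hl hv
    have hsplit : l ^ (m+1) + ∑ i ∈ Finset.range (m+1), π (c i) * l ^ i
        = π (c 0) + l * (l ^ m + ∑ i ∈ Finset.range m, π (c (i+1)) * l ^ i) := by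
      rw [Finset.sum_range_succ']
      rw [Finset.sum_congr rfl (fun i _ => show π (c (i+1)) * l ^ (i+1)
        = l * (π (c (i+1)) * l ^ i) by ring)]
      rw [← Finset.mul_sum]
      ring
    by_cases hc0 : IsUnit (c 0)
    · exact ⟨m, fun i => c (i+1), c 0, hc0, by rw [← hsplit]; exact hv⟩
    · have hc0m : c 0 ∈ IsLocalRing.maximalIdeal T := hc0
      have hvc0 : v (π (c 0)) < 1 := (hdom' _).mpr hc0m
      have h2 : v (l * (l ^ m + ∑ i ∈ Finset.range m, π (c (i+1)) * l ^ i)) < 1 := by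
        have heq : l * (l ^ m + ∑ i ∈ Finset.range m, π (c (i+1)) * l ^ i)
            = (l ^ (m+1) + ∑ i ∈ Finset.range (m+1), π (c i) * l ^ i) - π (c 0) := by
          rw [hsplit]; ring
        rw [heq]
        exact lt_of_le_of_lt (v.map_sub _ _) (max_lt hv hvc0)
      rw [v.map_mul, hl, one_mul] at h2
      rcases Nat.eq_zero_or_pos m with h0 | hm
      · subst h0
        simp only [pow_zero, Finset.range_zero, Finset.sum_empty, add_zero, v.map_one] at h2
        exact absurd h2 (lt_irrefl 1)
      · exact ih hm (fun i => c (i+1)) l hl h2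

private lemma st_aux_ideal
    {T : Type*} [CommRing T] [IsDomain T]
    {L : Type*} [Field L] {Γ₀ : Type*} [LinearOrderedCommGroupWithZero Γ₀]
    (v : Valuation L Γ₀)
    (S : Subalgebra T (FractionRing T))
    (ψ : S →+* L)
    (hle1 : ∀ x : S, v (ψ x) ≤ 1) :
    ∃ n : Ideal S, ∀ x : S, x ∈ n ↔ v (ψ x) < 1 :=
  ⟨{ carrier := {x : S | v (ψ x) < 1}
     add_mem' := fun {a b} ha hb => by
       simp only [Set.mem_setOf_eq, map_add] at *
       exact lt_of_le_of_lt (v.map_add _ _) (max_lt ha hb)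
     zero_mem' := by
       simp only [Set.mem_setOf_eq, map_zero, v.map_zero]
       exact zero_lt_one
     smul_mem' := fun s x hx => by
       simp only [Set.mem_setOf_eq, smul_eq_mul, map_mul, v.map_mul]
       calc v (ψ s) * v (ψ x) ≤ 1 * v (ψ x) := mul_le_mul_left (hle1 s) _
         _ = v (ψ x) := one_mul _
         _ < 1 := hx },
   fun x => Iff.rfl⟩

private lemma st_aux_max
    {T : Type*} [CommRing T] [IsDomain T] [IsLocalRing T]
    {L : Type*} [Field L] {Γ₀ : Type*} [LinearOrderedCommGroupWithZero Γ₀]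
    (v : Valuation L Γ₀) (π : T →+* L)
    (hdom' : ∀ s : T, v (π s) < 1 ↔ s ∈ IsLocalRing.maximalIdeal T)
    (halg : ∀ l : L, v l ≤ 1 → ∃ m : ℕ, 0 < m ∧ ∃ c : ℕ → T,
      v (l ^ m + ∑ i ∈ Finset.range m, π (c i) * l ^ i) < 1)
    (S : Subalgebra T (FractionRing T))
    (ψ : S →+* L)
    (hψT : ∀ s : T, ψ (algebraMap T S s) = π s)
    (hle1 : ∀ x : S, v (ψ x) ≤ 1)
    (n : Ideal S)
    (hmemn : ∀ x : S, x ∈ n ↔ v (ψ x) < 1) :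
    n.IsMaximal := by
  have key := st_aux_key v π hdom'
  rw [Ideal.isMaximal_iff]
  constructor
  · intro h1
    rw [hmemn, map_one, v.map_one] at h1
    exact absurd h1 (lt_irrefl 1)
  · intro J' x hle hxn hxJ
    have hvx : v (ψ x) = 1 := le_antisymm (hle1 x) (not_lt.mp (fun h => hxn ((hmemn x).mpr h)))
    obtain ⟨m, hm, c, hc⟩ := halg (ψ x) (hle1 x)
    obtain ⟨k, e, u, hu, hres⟩ := key m hm c (ψ x) hvx hc
    obtain ⟨w, hw⟩ := hu
    have hyn : (algebraMap T S u + x * (x ^ k + ∑ i ∈ Finset.range k,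
        algebraMap T S (e i) * x ^ i)) ∈ n := by
      rw [hmemn]
      simpa only [map_add, map_mul, map_pow, map_sum, hψT] using hres
    have hinv : algebraMap T S (↑w⁻¹) * algebraMap T S u = 1 := by
      rw [← map_mul, ← hw, Units.inv_mul, map_one]
    have h1eq : (1:S) = algebraMap T S (↑w⁻¹) * (algebraMap T S u + x * (x ^ k +
          ∑ i ∈ Finset.range k, algebraMap T S (e i) * x ^ i))
        - x * (algebraMap T S (↑w⁻¹) * (x ^ k +
          ∑ i ∈ Finset.range k, algebraMap T S (e i) * x ^ i)) := by
      calc (1:S) = algebraMap T S (↑w⁻¹) * algebraMap T S u := hinv.symm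
        _ = _ := by ring
    rw [h1eq]
    exact Ideal.sub_mem _ (Ideal.mul_mem_left _ _ (hle hyn)) (Ideal.mul_mem_right _ _ hxJ)
private lemma st_aux_le1
    {T : Type*} [CommRing T] [IsDomain T]
    {L : Type*} [Field L] {Γ₀ : Type*} [LinearOrderedCommGroupWithZero Γ₀]
    (v : Valuation L Γ₀) (π : T →+* L)
    (hdom : ∀ s : T, v (π s) ≤ 1)
    (I : Ideal T) (f : T) (hfmin : ∀ g ∈ I, v (π g) ≤ v (π f))
    (hvf : v (π f) ≠ 0)
    (S : Subalgebra T (FractionRing T))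
    (ψ : S →+* L)
    (hstruct : ∀ x : S, ∃ j : ℕ, ∃ a ∈ I ^ j, (x : FractionRing T)
      * algebraMap T (FractionRing T) f ^ j = algebraMap T (FractionRing T) a)
    (hpsi : ∀ (x : S) (j : ℕ) (a : T), a ∈ I ^ j →
      (x : FractionRing T) * algebraMap T (FractionRing T) f ^ j
        = algebraMap T (FractionRing T) a → ψ x * π f ^ j = π a) :
    ∀ x : S, v (ψ x) ≤ 1 := by
  have hbound : ∀ j : ℕ, ∀ a ∈ I ^ j, v (π a) ≤ v (π f) ^ j := by
    intro j
    induction j with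
    | zero => intro a _; rw [pow_zero]; exact hdom a
    | succ j ih =>
      intro a ha
      rw [pow_succ] at ha
      refine Submodule.mul_induction_on ha ?_ ?_
      · intro b hb g hg
        rw [map_mul, map_mul, pow_succ]
        exact mul_le_mul' (ih b hb) (hfmin g hg)
      · intro b1 b2 ih1 ih2
        rw [map_add]
        exact le_trans (v.map_add _ _) (max_le ih1 ih2)
  intro x
  obtain ⟨j, a, ha, he⟩ := hstruct x
  have h1 : ψ x * π f ^ j = π a := hpsi x j a ha he
  have h3 : v (ψ x) * v (π f) ^ j ≤ 1 * v (π f) ^ j := by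
    rw [one_mul]
    calc v (ψ x) * v (π f) ^ j = v (ψ x * π f ^ j) := by rw [map_mul, map_pow]
      _ = v (π a) := by rw [h1]
      _ ≤ _ := hbound j a ha
  exact le_of_mul_le_mul_right h3 (zero_lt_iff.mpr (pow_ne_zero j hvf))

private lemma st_aux_ker
    {T : Type*} [CommRing T] [IsDomain T]
    {L : Type*} [Field L]
    (π : T →+* L)
    (P : Ideal T) (hker : RingHom.ker π = P)
    (I : Ideal T) (f : T) (hfI : f ∈ I) (hπf : π f ≠ 0)
    (S : Subalgebra T (FractionRing T))
    (ψ : S →+* L)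
    (hψT : ∀ s : T, ψ (algebraMap T S s) = π s)
    (hstruct : ∀ x : S, ∃ j : ℕ, ∃ a ∈ I ^ j, (x : FractionRing T)
      * algebraMap T (FractionRing T) f ^ j = algebraMap T (FractionRing T) a)
    (hpow : ∀ j : ℕ, ∀ b ∈ I ^ j, ∃ s : S, (s : FractionRing T)
      * algebraMap T (FractionRing T) f ^ j = algebraMap T (FractionRing T) b)
    (hpsi : ∀ (x : S) (j : ℕ) (a : T), a ∈ I ^ j →
      (x : FractionRing T) * algebraMap T (FractionRing T) f ^ j
        = algebraMap T (FractionRing T) a → ψ x * π f ^ j = π a)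
    (J : Ideal S)
    (hJ : J = ⨆ j : ℕ, (Ideal.map (algebraMap T S) P).colon
      (((Ideal.map (algebraMap T S) I) ^ j : Ideal S) : Set S)) :
    RingHom.ker ψ = J := by
  set K := FractionRing T
  have hPS : Ideal.map (algebraMap T S) P ≤ RingHom.ker ψ := by
    rw [Ideal.map_le_iff_le_comap]
    intro p hp
    simp only [Ideal.mem_comap, RingHom.mem_ker, hψT]
    rw [← RingHom.mem_ker, hker]; exact hp
  have hdir : Directed (· ≤ ·) (fun j : ℕ => (Ideal.map (algebraMap T S) P).colon
      (((Ideal.map (algebraMap T S) I) ^ j : Ideal S) : Set S)) := by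
    apply Monotone.directed_le
    intro j k hjk
    exact Submodule.colon_mono le_rfl (SetLike.coe_subset_coe.mpr (Ideal.pow_le_pow_right hjk))
  apply le_antisymm
  · intro x hx
    rw [RingHom.mem_ker] at hx
    obtain ⟨j, a, ha, he⟩ := hstruct x
    have h1 : ψ x * π f ^ j = π a := hpsi x j a ha he
    rw [hx, zero_mul] at h1
    have haP : a ∈ P := by rw [← hker]; exact h1.symm
    rw [hJ]
    apply Submodule.mem_iSup_of_directed _ hdir |>.mpr
    refine ⟨j, ?_⟩
    rw [Submodule.mem_colon]
    intro p hp
    rw [← Ideal.map_pow] at hp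
    have hsub : Ideal.map (algebraMap T S) (I ^ j) ≤
        (Ideal.map (algebraMap T S) P).colon ((Ideal.span {x} : Ideal S) : Set S) := by
      rw [Ideal.map_le_iff_le_comap]
      intro b hb
      rw [Ideal.mem_comap, Submodule.mem_colon_span_singleton, smul_eq_mul]
      obtain ⟨s, hs⟩ := hpow j b hb
      have : (algebraMap T S b) * x = (algebraMap T S a) * s := by
        apply Subtype.ext
        show (algebraMap T K b) * (x : K) = (algebraMap T K a) * (s : K)
        linear_combination (-(x : K)) * hs + (s : K) * he
      rw [this]
      exact Ideal.mul_mem_right _ _ (Ideal.mem_map_of_mem _ haP)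
    have hxp := hsub hp
    rw [Submodule.mem_colon_span_singleton, smul_eq_mul] at hxp
    rw [smul_eq_mul, mul_comm]
    exact hxp
  · rw [hJ]
    apply iSup_le
    intro j x hx
    rw [Submodule.mem_colon] at hx
    have hfj : (algebraMap T S f) ^ j ∈ (Ideal.map (algebraMap T S) I) ^ j :=
      Ideal.pow_mem_pow (Ideal.mem_map_of_mem _ hfI) j
    have hxf := hx _ hfj
    rw [smul_eq_mul] at hxf
    have h0 : ψ (x * (algebraMap T S f) ^ j) = 0 := hPS hxf
    rw [map_mul, map_pow, hψT] at h0
    rw [RingHom.mem_ker]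
    rcases mul_eq_zero.mp h0 with h | h
    · exact h
    · exact absurd h (pow_ne_zero j hπf)
/-- The strict transform lemma for pseudo-valuations. Let `T` be a local domain with
fraction field `Kf`, `P ⊂ T` a prime, and `ω` a valuation (here `v`, in multiplicative
notation, on a field `L` realizing `Frac(T/P)` via `π : T →+* L` with kernel `P`)
dominating `T/P`, whose residue field is algebraic over `T/m_T`.  Let `I ⊄ P` be an
ideal and `f ∈ I` an element of minimal `ω`-value (maximal `v`-value), and let
`S = T[I/f] ⊆ Frac T`.  Let `ψ : S →+* L` be the induced extension of `π` (with
`ψ(g/f)·π(f) = π(g)`), and `J` the strict transform `⋃_j (P·S : I^j·S)` of `P`.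
Then `J` is prime, `J = ker ψ` (so `T/P → S/J` is birational, both having quotient
field `L`), and the set `n` of elements of `S` of positive `ω`-value is a maximal
ideal of `S` containing `J`. -/
theorem strict_transform_prime_and_maximal
    {T : Type*} [CommRing T] [IsDomain T] [IsLocalRing T]
    {L : Type*} [Field L] {Γ₀ : Type*} [LinearOrderedCommGroupWithZero Γ₀]
    (v : Valuation L Γ₀) (π : T →+* L)
    (P : Ideal T) (hPprime : P.IsPrime) (hker : RingHom.ker π = P)
    (hfrac : ∀ l : L, ∃ a s : T, π s ≠ 0 ∧ l * π s = π a)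
    (hdom : ∀ s : T, v (π s) ≤ 1)
    (hdom' : ∀ s : T, v (π s) < 1 ↔ s ∈ IsLocalRing.maximalIdeal T)
    (halg : ∀ l : L, v l ≤ 1 → ∃ m : ℕ, 0 < m ∧ ∃ c : ℕ → T,
      v (l ^ m + ∑ i ∈ Finset.range m, π (c i) * l ^ i) < 1)
    (I : Ideal T) (hI0 : I ≠ 0) (hIP : ¬ I ≤ P)
    (f : T) (hfI : f ∈ I) (hfmin : ∀ g ∈ I, v (π g) ≤ v (π f))
    (S : Subalgebra T (FractionRing T))
    (hS : S = Algebra.adjoin T {x : FractionRing T |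
      ∃ g ∈ I, x * algebraMap T (FractionRing T) f = algebraMap T (FractionRing T) g})
    (ψ : S →+* L)
    (hψT : ∀ s : T, ψ (algebraMap T S s) = π s)
    (hψf : ∀ (x : S) (g : T), g ∈ I →
      (x : FractionRing T) * algebraMap T (FractionRing T) f =
        algebraMap T (FractionRing T) g → ψ x * π f = π g)
    (J : Ideal S)
    (hJ : J = ⨆ j : ℕ, (Ideal.map (algebraMap T S) P).colon
      (((Ideal.map (algebraMap T S) I) ^ j : Ideal S) : Set S)) :
    J.IsPrime ∧ RingHom.ker ψ = J ∧
    ∃ n : Ideal S, n.IsMaximal ∧ J ≤ n ∧ ∀ x : S, x ∈ n ↔ v (ψ x) < 1 := by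
  have hπf : π f ≠ 0 := by
    intro h0
    apply hIP
    intro g hg
    have hvg : v (π g) ≤ v (π f) := hfmin g hg
    rw [h0, map_zero] at hvg
    have hg0 : v (π g) = 0 := le_antisymm hvg (zero_le')
    have hg0' : π g = 0 := (Valuation.zero_iff v).mp hg0
    rw [← hker]; exact hg0'
  have hf0 : f ≠ 0 := by
    intro h; apply hπf; rw [h, map_zero]
  have hvf : v (π f) ≠ 0 := (Valuation.ne_zero_iff v).mpr hπf
  have hpow := st_aux_pow I f hf0 S hS
  have hstruct := st_aux_struct I f hfI S hS
  have hpsi := st_aux_psi π I f S ψ hψT hψf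
  have hle1 := st_aux_le1 v π hdom I f hfmin hvf S ψ hstruct hpsi
  have hkerJ := st_aux_ker π P hker I f hfI hπf S ψ hψT hstruct hpow hpsi J hJ
  have hJprime : J.IsPrime := by
    rw [← hkerJ]
    exact RingHom.ker_isPrime ψ
  obtain ⟨n, hmemn⟩ := st_aux_ideal v S ψ hle1
  have hnmax := st_aux_max v π hdom' halg S ψ hψT hle1 n hmemn
  refine ⟨hJprime, hkerJ, n, hnmax, ?_, hmemn⟩
  intro x hx
  rw [hmemn]
  have hx0 : ψ x = 0 := by rw [← RingHom.mem_ker, hkerJ]; exact hx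
  rw [hx0, v.map_zero]
  exact zero_lt_one
end
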